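/- Let p be a prime, e ≥ 1, q = p^e, and let a, b be natural numbers with a ≥ 1 and b ≤ e−1. For all non-negative integers c_0, c_1, …, c_a there exist a dimension v and a p^{ae−b}-divisible multiset of points M in PG(v−1,q) with cardinality #M = Σ_{i=0}^{a} c_i·s_q(a,b,i). -/

import Mathlib

open Module Finset

noncomputable section
open scoped Classical

variable (F : Type) [Field F] [Fintype F]

instance finiteSubmodule (v : ℕ) : Finite (Submodule F (Fin v → F)) :=
  Finite.of_injective (fun s => (s : Set (Fin v → F))) SetLike.coe_injective

/-- The points of `PG(v-1,q)`: one-dimensional subspaces of `F_q^v`. -/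
abbrev PGPoint (v : ℕ) := {W : Submodule F (Fin v → F) // finrank F W = 1}

instance (v : ℕ) : Fintype (PGPoint F v) := Fintype.ofFinite _

/-- Cardinality of a multiset of points. -/
def mCard {v : ℕ} (M : PGPoint F v → ℕ) : ℕ := ∑ P, M P

/-- Multiplicity of a subspace: the sum of multiplicities over points contained in it. -/
def mVal {v : ℕ} (M : PGPoint F v → ℕ) (S : Submodule F (Fin v → F)) : ℕ :=
  ∑ P : PGPoint F v, if P.1 ≤ S then M P else 0

/-- A multiset of points is `Δ`-divisible if `#M ≡ M(H) (mod Δ)` for every hyperplane `H`. -/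
def IsDivisibleMultiset {v : ℕ} (Δ : ℕ) (M : PGPoint F v → ℕ) : Prop :=
  ∀ H : Submodule F (Fin v → F), finrank F H = v - 1 → mCard F M ≡ mVal F M H [MOD Δ]

/-- A set of points is `Δ`-divisible if `|S| ≡ |S ∩ H| (mod Δ)` for every hyperplane `H`. -/
def IsDivisibleSet {v : ℕ} (Δ : ℕ) (S : Set (PGPoint F v)) : Prop :=
  ∀ H : Submodule F (Fin v → F), finrank F H = v - 1 →
    S.ncard ≡ (S ∩ {P | P.1 ≤ H}).ncard [MOD Δ]

/-- A linear code `C ≤ F_q^m` is `Δ`-divisible if all Hamming weights are divisible by `Δ`. -/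
def IsDivisibleCode {m : ℕ} (Δ : ℕ) (C : Submodule F (Fin m → F)) : Prop :=
  ∀ c ∈ C, Δ ∣ hammingNorm c

/-- The effective length: the number of coordinates where some codeword is nonzero. -/
def effLength {m : ℕ} (C : Submodule F (Fin m → F)) : ℕ :=
  Nat.card {i : Fin m // ∃ c ∈ C, c i ≠ 0}

/-- `s_q(a,b,i)`, with `q = p^e`, written without division:
`s_q(a,b,0) = 1 + q + ⋯ + q^a` and `s_q(a,b,i) = p^{ie-b}·(1 + q + ⋯ + q^{a-i})` for `i ≥ 1`. -/
def sQ (p e a b i : ℕ) : ℕ :=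
  if i = 0 then ∑ j ∈ Finset.range (a + 1), (p ^ e) ^ j
  else p ^ (i * e - b) * ∑ j ∈ Finset.range (a - i + 1), (p ^ e) ^ j

section AuxLemmas

lemma geom_mul (q d : ℕ) (hq : 1 ≤ q) :
    (∑ j ∈ Finset.range d, q ^ j) * (q - 1) = q ^ d - 1 := by
  induction d with
  | zero => simp
  | succ d ih =>
    rw [Finset.sum_range_succ, add_mul, ih]
    have h1 : 1 ≤ q ^ d := Nat.one_le_pow _ _ hq
    have h2 : q ^ (d + 1) = q ^ d * q := pow_succ q d
    have h3 : q ^ d * (q - 1) = q ^ d * q - q ^ d := by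
      rw [Nat.mul_sub, Nat.mul_one]
    have h4 : q ^ d ≤ q ^ d * q := Nat.le_mul_of_pos_right _ (by omega)
    omega

/-- The number of points of `PG(v-1,q)` contained in a subspace `S` of dimension `d`
is `1 + q + ⋯ + q^(d-1)`. -/
lemma card_points_eq (v : ℕ) (S : Submodule F (Fin v → F)) :
    (Finset.univ.filter fun P : PGPoint F v => P.1 ≤ S).card
      = ∑ j ∈ Finset.range (finrank F S), Fintype.card F ^ j := by
  classical
  set q := Fintype.card F with hq
  have hq2 : 2 ≤ q := Fintype.one_lt_card
  set T : Finset (Fin v → F) := (Finset.univ.filter (· ∈ S)).erase 0 with hT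
  have hScard : (Finset.univ.filter (· ∈ S)).card = q ^ finrank F S := by
    rw [← Fintype.card_subtype]
    exact card_eq_pow_finrank
  have hTcard : T.card = q ^ finrank F S - 1 := by
    rw [hT, Finset.card_erase_of_mem (by simp [S.zero_mem]), hScard]
  set pts := Finset.univ.filter fun P : PGPoint F v => P.1 ≤ S with hpts
  have hkey : T = pts.biUnion fun P => T.filter (fun x => x ∈ P.1) := by
    ext x
    simp only [Finset.mem_biUnion, Finset.mem_filter, hpts, Finset.mem_univ, true_and]
    constructor
    · intro hx
      have hx0 : x ≠ 0 := by simp [hT] at hx; tauto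
      have hxS : x ∈ S := by simp [hT] at hx; tauto
      refine ⟨⟨Submodule.span F {x}, finrank_span_singleton hx0⟩, ?_, hx, ?_⟩
      · exact (Submodule.span_singleton_le_iff_mem x S).mpr hxS
      · exact Submodule.mem_span_singleton_self x
    · rintro ⟨P, _, hx, _⟩; exact hx
  have hdisj : ∀ P1 ∈ pts, ∀ P2 ∈ pts, P1 ≠ P2 →
      Disjoint (T.filter (fun x => x ∈ P1.1)) (T.filter (fun x => x ∈ P2.1)) := by
    intro P1 _ P2 _ hne
    rw [Finset.disjoint_left]
    intro x hx1 hx2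
    simp only [Finset.mem_filter, hT, Finset.mem_erase] at hx1 hx2
    have hx0 : x ≠ 0 := hx1.1.1
    have e1 : Submodule.span F {x} = P1.1 :=
      Submodule.eq_of_le_of_finrank_eq
        ((Submodule.span_singleton_le_iff_mem x P1.1).mpr hx1.2)
        (by rw [finrank_span_singleton hx0, P1.2])
    have e2 : Submodule.span F {x} = P2.1 :=
      Submodule.eq_of_le_of_finrank_eq
        ((Submodule.span_singleton_le_iff_mem x P2.1).mpr hx2.2)
        (by rw [finrank_span_singleton hx0, P2.2])
    exact hne (Subtype.ext (e1 ▸ e2))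
  have hfib : ∀ P ∈ pts, (T.filter (fun x => x ∈ P.1)).card = q - 1 := by
    intro P hP
    simp only [hpts, Finset.mem_filter] at hP
    have : T.filter (fun x => x ∈ P.1) = (Finset.univ.filter (· ∈ P.1)).erase 0 := by
      ext x
      simp only [Finset.mem_filter, hT, Finset.mem_erase, Finset.mem_univ, true_and]
      constructor
      · rintro ⟨⟨h0, _⟩, hp⟩; exact ⟨h0, hp⟩
      · rintro ⟨h0, hp⟩; exact ⟨⟨h0, hP.2 hp⟩, hp⟩
    rw [this, Finset.card_erase_of_mem (by simp [P.1.zero_mem]), ← Fintype.card_subtype]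
    rw [show Fintype.card {x // x ∈ P.1} = q ^ finrank F P.1 from card_eq_pow_finrank, P.2,
      pow_one]
  have hcount : T.card = pts.card * (q - 1) := by
    rw [hkey, Finset.card_biUnion hdisj]
    rw [Finset.sum_congr rfl hfib, Finset.sum_const, smul_eq_mul]
  have hgm := geom_mul q (finrank F S) (by omega)
  have hpos : 0 < q - 1 := by omega
  apply Nat.eq_of_mul_eq_mul_right hpos
  rw [hgm, ← hTcard, hcount]

/-- A hyperplane either contains a subspace `S` or cuts it in codimension one. -/
lemma inf_hyperplane (v : ℕ) (H S : Submodule F (Fin v → F)) (hH : finrank F H = v - 1) :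
    S ⊓ H = S ∨ finrank F ↥(S ⊓ H) + 1 = finrank F S := by
  by_cases hle : S ≤ H
  · exact Or.inl (inf_eq_left.mpr hle)
  · right
    have hdim : finrank F (Fin v → F) = v := Module.finrank_fin_fun F
    have hsub : H < S ⊔ H := lt_of_le_of_ne le_sup_right
      (fun h => hle (h ▸ le_sup_left))
    have h1 : finrank F H < finrank F ↥(S ⊔ H) := Submodule.finrank_lt_finrank_of_lt hsub
    have h2 : finrank F ↥(S ⊔ H) ≤ v := le_trans (Submodule.finrank_le _) (le_of_eq hdim)
    have h3 := Submodule.finrank_sup_add_finrank_inf_eq S H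
    omega

end AuxLemmas

/-- For `q = p^e`, `a ≥ 1`, `b ≤ e-1` and non-negative integers
`c_0,…,c_a`, there is a dimension `v` and a `p^{ae-b}`-divisible multiset of points in
`PG(v-1,q)` of cardinality `∑_{i=0}^a c_i·s_q(a,b,i)`. -/
theorem stmt_2 (p e a b : ℕ) (hp : p.Prime) (he : 1 ≤ e) (ha : 1 ≤ a) (hb : b ≤ e - 1)
    (hF : Fintype.card F = p ^ e) (c : Fin (a + 1) → ℕ) :
    ∃ (v : ℕ) (M : PGPoint F v → ℕ),
      IsDivisibleMultiset F (p ^ (a * e - b)) M ∧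
      mCard F M = ∑ i : Fin (a + 1), c i * sQ p e a b i := by
  classical
  have hdim : finrank F (Fin (a + 1) → F) = a + 1 := Module.finrank_fin_fun F
  -- choose subspaces `U i` of dimension `a + 1 - i`
  have hUex : ∀ i : Fin (a + 1), ∃ U : Submodule F (Fin (a + 1) → F),
      finrank F U = a + 1 - (i : ℕ) := by
    intro i
    have hle : a + 1 - (i : ℕ) ≤ finrank F (Fin (a + 1) → F) := by rw [hdim]; omega
    obtain ⟨f, hf⟩ := exists_linearIndependent_of_le_finrank hle
    exact ⟨Submodule.span F (Set.range f),
      by rw [finrank_span_eq_card hf, Fintype.card_fin]⟩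
  choose U hUrank using hUex
  set q := Fintype.card F with hqdef
  set t : Fin (a + 1) → ℕ := fun i => if (i : ℕ) = 0 then 1 else p ^ ((i : ℕ) * e - b) with ht
  set M : PGPoint F (a + 1) → ℕ :=
    fun P => ∑ i, c i * t i * (if P.1 ≤ U i then 1 else 0) with hM
  -- the value of `M` on any subspace `S`
  have hval : ∀ S : Submodule F (Fin (a + 1) → F),
      (∑ P : PGPoint F (a + 1), if P.1 ≤ S then M P else 0)
        = ∑ i, c i * t i *
            (Finset.univ.filter fun P : PGPoint F (a + 1) => P.1 ≤ U i ⊓ S).card := by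
    intro S
    calc (∑ P : PGPoint F (a + 1), if P.1 ≤ S then M P else 0)
        = ∑ P : PGPoint F (a + 1), ∑ i,
            c i * t i * (if P.1 ≤ U i ⊓ S then 1 else 0) := by
          apply Finset.sum_congr rfl
          intro P _
          by_cases hPS : P.1 ≤ S
          · rw [if_pos hPS, hM]
            apply Finset.sum_congr rfl
            intro i _
            congr 1
            simp [le_inf_iff, hPS]
          · rw [if_neg hPS]
            symm
            apply Finset.sum_eq_zero
            intro i _
            have : ¬ (P.1 ≤ U i ⊓ S) := fun h => hPS (le_inf_iff.mp h).2
            simp [this]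
      _ = ∑ i, ∑ P : PGPoint F (a + 1),
            c i * t i * (if P.1 ≤ U i ⊓ S then 1 else 0) := Finset.sum_comm
      _ = _ := by
          apply Finset.sum_congr rfl
          intro i _
          rw [← Finset.mul_sum, Finset.card_filter]
  have hNi : ∀ i : Fin (a + 1),
      (Finset.univ.filter fun P : PGPoint F (a + 1) => P.1 ≤ U i).card
        = ∑ j ∈ Finset.range (a + 1 - (i : ℕ)), q ^ j := by
    intro i
    rw [card_points_eq, hUrank]
  have hcard : mCard F M
      = ∑ i, c i * t i * ∑ j ∈ Finset.range (a + 1 - (i : ℕ)), q ^ j := by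
    have h1 : mCard F M
        = ∑ P : PGPoint F (a + 1), if P.1 ≤ (⊤ : Submodule F _) then M P else 0 :=
      Finset.sum_congr rfl (fun P _ => by simp)
    rw [h1, hval ⊤]
    apply Finset.sum_congr rfl
    intro i _
    rw [inf_top_eq, hNi]
  refine ⟨a + 1, M, ?_, ?_⟩
  · -- divisibility
    intro H hH
    have hmval : mVal F M H = ∑ i, c i * t i *
        (Finset.univ.filter fun P : PGPoint F (a + 1) => P.1 ≤ U i ⊓ H).card := hval H
    rw [← ZMod.natCast_eq_natCast_iff, hcard, hmval, Nat.cast_sum, Nat.cast_sum]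
    apply Finset.sum_congr rfl
    intro i _
    have hia : (i : ℕ) ≤ a := Nat.lt_succ_iff.mp i.isLt
    rcases inf_hyperplane F (a + 1) H (U i) hH with heq | hr
    · have hEq : (Finset.univ.filter fun P : PGPoint F (a + 1) => P.1 ≤ U i ⊓ H).card
          = ∑ j ∈ Finset.range (a + 1 - (i : ℕ)), q ^ j := by
        rw [heq]; exact hNi i
      rw [hEq]
    · have hfr : finrank F ↥(U i ⊓ H) = a - (i : ℕ) := by
        rw [hUrank i] at hr; omega
      have hN' : (Finset.univ.filter fun P : PGPoint F (a + 1) => P.1 ≤ U i ⊓ H).card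
          = ∑ j ∈ Finset.range (a - (i : ℕ)), q ^ j := by
        rw [card_points_eq, hfr]
      have hsplit : (∑ j ∈ Finset.range (a + 1 - (i : ℕ)), q ^ j)
          = (∑ j ∈ Finset.range (a - (i : ℕ)), q ^ j) + q ^ (a - (i : ℕ)) := by
        rw [show a + 1 - (i : ℕ) = a - (i : ℕ) + 1 by omega, Finset.sum_range_succ]
      have hqa : q ^ (a - (i : ℕ)) = p ^ (e * (a - (i : ℕ))) := by rw [hF, ← pow_mul]
      have hdvd : p ^ (a * e - b) ∣ t i * q ^ (a - (i : ℕ)) := by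
        by_cases h0 : (i : ℕ) = 0
        · have hti : t i = 1 := by simp [ht, h0]
          rw [hti, one_mul, hqa, h0, Nat.sub_zero]
          exact pow_dvd_pow p (by rw [Nat.mul_comm e a]; exact Nat.sub_le _ _)
        · have hti : t i = p ^ ((i : ℕ) * e - b) := by rw [ht]; exact if_neg h0
          rw [hti, hqa, ← pow_add]
          have hi1 : 1 ≤ (i : ℕ) := Nat.one_le_iff_ne_zero.mpr h0
          have hbe : b ≤ (i : ℕ) * e :=
            le_trans (by omega) (Nat.le_mul_of_pos_left e (by omega))
          have hsum : (i : ℕ) * e + e * (a - (i : ℕ)) = a * e := by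
            rw [Nat.mul_comm e (a - (i : ℕ)), ← Nat.add_mul, Nat.add_sub_cancel' hia]
          have : (i : ℕ) * e - b + e * (a - (i : ℕ)) = a * e - b := by omega
          rw [this]
      have hexp : c i * t i * ((∑ j ∈ Finset.range (a - (i : ℕ)), q ^ j) + q ^ (a - (i : ℕ)))
          = c i * t i * (∑ j ∈ Finset.range (a - (i : ℕ)), q ^ j)
            + c i * (t i * q ^ (a - (i : ℕ))) := by ring
      rw [hN', hsplit, hexp, Nat.cast_add,
        Nat.cast_mul (c i) (t i * q ^ (a - (i : ℕ))),
        (ZMod.natCast_eq_zero_iff _ _).mpr hdvd, mul_zero, add_zero]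
  · -- cardinality
    rw [hcard]
    apply Finset.sum_congr rfl
    intro i _
    have hia : (i : ℕ) ≤ a := Nat.lt_succ_iff.mp i.isLt
    have h2 : a + 1 - (i : ℕ) = a - (i : ℕ) + 1 := by omega
    simp only [sQ, ht, hF, h2]
    by_cases h0 : (i : ℕ) = 0
    · simp [h0]
    · simp [h0, mul_assoc]

end
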